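/- Let H be a tournament with at least two vertices and let T be a nonempty tournament that is H-far. Then for every integer k ≥ 0 there exists an H-free tournament G with |G| = |T|^k and tr(G) = tr(T)^k. -/

import Mathlib

open Finset

attribute [local instance] Classical.propDecidable

/-- A tournament on vertex set `Fin n`: for every pair of distinct vertices exactly one
direction is present, and no vertex is adjacent to itself. -/
structure Tournament where
  n : ℕ
  adj : Fin n → Fin n → Prop
  asymm : ∀ u v, adj u v → ¬ adj v u
  total : ∀ u v, u ≠ v → adj u v ∨ adj v u

namespace Tournament

/-- `S` is a transitive set: the adjacency relation restricted to `S` is a strict linear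
order (by the tournament axioms this is equivalent to transitivity on `S`). -/
def IsTransitiveSet (T : Tournament) (S : Finset (Fin T.n)) : Prop :=
  ∀ a ∈ S, ∀ b ∈ S, ∀ c ∈ S, T.adj a b → T.adj b c → T.adj a c

/-- `tr T`: the maximum size of a transitive subset of the vertices of `T`. -/
noncomputable def transNum (T : Tournament) : ℕ :=
  sSup {m | ∃ S : Finset (Fin T.n), T.IsTransitiveSet S ∧ S.card = m}

/-- `T` contains an induced copy of `H`. -/
def Contains (T H : Tournament) : Prop :=
  ∃ f : Fin H.n → Fin T.n, Function.Injective f ∧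
    ∀ u v : Fin H.n, H.adj u v ↔ T.adj (f u) (f v)

/-- `T` is `H`-free: no set of vertices of `T` induces a subtournament isomorphic to `H`. -/
def HFree (T H : Tournament) : Prop := ¬ T.Contains H

/-- `S` is a homogeneous set of `T`. -/
def IsHomogeneous (T : Tournament) (S : Finset (Fin T.n)) : Prop :=
  ∀ v, v ∉ S → (∀ s ∈ S, T.adj v s) ∨ (∀ s ∈ S, T.adj s v)

/-- A tournament is prime if it has no nontrivial homogeneous set. -/
def IsPrime (T : Tournament) : Prop :=
  ¬ ∃ S : Finset (Fin T.n), T.IsHomogeneous S ∧ 1 < S.card ∧ S.card < T.n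

/-- The backward-edge graph of `T` under the ordering `σ` (where `σ p` is the vertex in
position `p`): `u` and `v` are joined iff the tournament edge between them goes from the
later position to the earlier one. -/
def backAdj (T : Tournament) (σ : Equiv.Perm (Fin T.n)) (u v : Fin T.n) : Prop :=
  (σ.symm u < σ.symm v ∧ T.adj v u) ∨ (σ.symm v < σ.symm u ∧ T.adj u v)

/-- `σ` is a galaxy ordering of `T` with center assignment `ctr` (mapping each vertex to the
center of its star component, centers and singletons being fixed points): every backward edge
joins a leaf to its center, each star is a left star or a right star, and no center of a star
lies between two leaves of another star. -/
def IsGalaxyOrdering (T : Tournament) (σ : Equiv.Perm (Fin T.n))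
    (ctr : Fin T.n → Fin T.n) : Prop :=
  (∀ v, ctr (ctr v) = ctr v) ∧
  (∀ v, ctr v ≠ v → T.backAdj σ v (ctr v)) ∧
  (∀ u v, T.backAdj σ u v → (ctr u = u ∧ ctr v = u) ∨ (ctr v = v ∧ ctr u = v)) ∧
  (∀ c, ctr c = c →
    (∀ v, ctr v = c → v = c ∨ σ.symm v < σ.symm c) ∨
    (∀ v, ctr v = c → v = c ∨ σ.symm c < σ.symm v)) ∧
  (∀ c, ctr c = c → (∃ v, v ≠ c ∧ ctr v = c) →
    ∀ l₁ l₂, l₁ ≠ ctr l₁ → l₂ ≠ ctr l₂ → ctr l₁ = ctr l₂ → ctr l₁ ≠ c →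
      ¬ (σ.symm l₁ < σ.symm c ∧ σ.symm c < σ.symm l₂))

/-- A tournament is a galaxy if it admits a galaxy ordering. -/
def IsGalaxy (T : Tournament) : Prop := ∃ σ ctr, T.IsGalaxyOrdering σ ctr

/-- A tournament is a star: it has an ordering of its vertices under which the backward-edge
graph is connected and is a star `K_{1,t}` whose center comes before all its leaves or after
all its leaves. -/
def IsStar (T : Tournament) : Prop :=
  ∃ (σ : Equiv.Perm (Fin T.n)) (c : Fin T.n),
    (∀ v, v ≠ c → T.backAdj σ c v) ∧
    (∀ u v, T.backAdj σ u v → u = c ∨ v = c) ∧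
    ((∀ v, v ≠ c → σ.symm c < σ.symm v) ∨ (∀ v, v ≠ c → σ.symm v < σ.symm c))

/-- `P` is a partition of the vertex set of `T` into transitive sets. -/
def IsTransPartition (T : Tournament) (P : Finset (Finset (Fin T.n))) : Prop :=
  (∀ S ∈ P, T.IsTransitiveSet S) ∧ ∀ v : Fin T.n, ∃! S, S ∈ P ∧ v ∈ S

/-- The chromatic number of `T`: the least number of parts in a partition of the vertices of
`T` into transitive sets. -/
noncomputable def chromaticNum (T : Tournament) : ℕ :=
  sInf {m | ∃ P : Finset (Finset (Fin T.n)), T.IsTransPartition P ∧ P.card = m}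

/-- The directed density from `X` to `Y`. -/
noncomputable def density (T : Tournament) (X Y : Finset (Fin T.n)) : ℝ :=
  (((X ×ˢ Y).filter fun p => T.adj p.1 p.2).card : ℝ) / ((X.card : ℝ) * (Y.card : ℝ))

/-- Common part of the definitions of l-sequences and m-sequences: pairwise disjoint
nonempty sets with density at least `1 - lam` forwards. -/
def SeqBase (T : Tournament) (lam : ℝ) (m : ℕ) (S : Fin m → Finset (Fin T.n)) : Prop :=
  (∀ i, (S i).Nonempty) ∧ (∀ i j, i ≠ j → Disjoint (S i) (S j)) ∧
  ∀ i j : Fin m, i < j → 1 - lam ≤ T.density (S i) (S j)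

/-- A `(c, lam)`-l-sequence: every set is `c`-linear. -/
def IsLSeq (T : Tournament) (c lam : ℝ) (m : ℕ) (S : Fin m → Finset (Fin T.n)) : Prop :=
  T.SeqBase lam m S ∧ ∀ i, c * (T.n : ℝ) ≤ ((S i).card : ℝ)

/-- A `(c₁, c₂, lam, eps)`-m-sequence: sets in odd positions (even `0`-based indices) are
`c₂`-linear, sets in even positions are transitive and `(c₁, eps)`-big. -/
def IsMSeq (T : Tournament) (c₁ c₂ lam eps : ℝ) (m : ℕ)
    (S : Fin m → Finset (Fin T.n)) : Prop :=
  T.SeqBase lam m S ∧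
  (∀ i : Fin m, (i : ℕ) % 2 = 0 → c₂ * (T.n : ℝ) ≤ ((S i).card : ℝ)) ∧
  (∀ i : Fin m, (i : ℕ) % 2 = 1 →
    T.IsTransitiveSet (S i) ∧ c₁ * (T.n : ℝ) ^ eps ≤ ((S i).card : ℝ))

/-- A sequence of sets is smooth if the `1 - lam` density condition holds pointwise. -/
def Smooth (T : Tournament) (lam : ℝ) (m : ℕ) (S : Fin m → Finset (Fin T.n)) : Prop :=
  ∀ i j : Fin m, i < j →
    (∀ v ∈ S i, 1 - lam ≤ T.density {v} (S j)) ∧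
    (∀ v ∈ S j, 1 - lam ≤ T.density (S i) {v})

/-- `P` is a partition of the vertex set of `T` into homogeneous sets. -/
def IsHomogeneousPartition (T : Tournament) (P : Finset (Finset (Fin T.n))) : Prop :=
  (∀ A ∈ P, A.Nonempty ∧ T.IsHomogeneous A) ∧ ∀ v : Fin T.n, ∃! A, A ∈ P ∧ v ∈ A

/-- `p T`: the least number of parts of a nontrivial homogeneous partition. -/
noncomputable def partNum (T : Tournament) : ℕ :=
  sInf {m | ∃ P : Finset (Finset (Fin T.n)),
    T.IsHomogeneousPartition P ∧ 1 < P.card ∧ P.card = m}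

/-- `T` is `H`-far: for every nontrivial homogeneous partition `P` of the vertices of `H`,
`T` contains no subtournament isomorphic to the quotient tournament `H_P`. -/
def HFar (T H : Tournament) : Prop :=
  ∀ P : Finset (Finset (Fin H.n)), H.IsHomogeneousPartition P → 1 < P.card →
    ¬ ∃ g : {A // A ∈ P} → Fin T.n, Function.Injective g ∧
        ∀ A B : {A // A ∈ P}, A ≠ B →
          ((∀ a ∈ A.1, ∀ b ∈ B.1, H.adj a b) ↔ T.adj (g A) (g B))



/-! ### Auxiliary lemmas -/

lemma isTransitiveSet_empty (T : Tournament) : T.IsTransitiveSet ∅ := by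
  intro a ha; simp at ha

lemma isTransitiveSet_singleton (T : Tournament) (x : Fin T.n) :
    T.IsTransitiveSet {x} := by
  intro a ha b hb c hc hab _
  simp only [Finset.mem_singleton] at ha hb
  subst ha; subst hb
  exact absurd hab (T.asymm _ _ hab)

lemma bddAbove_transSet (T : Tournament) :
    BddAbove {m | ∃ S : Finset (Fin T.n), T.IsTransitiveSet S ∧ S.card = m} := by
  refine ⟨T.n, ?_⟩
  rintro m ⟨S, -, rfl⟩
  simpa using S.card_le_univ

lemma le_transNum (T : Tournament) {S : Finset (Fin T.n)} (h : T.IsTransitiveSet S) :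
    S.card ≤ T.transNum :=
  le_csSup T.bddAbove_transSet ⟨S, h, rfl⟩

lemma transNum_spec (T : Tournament) :
    ∃ S : Finset (Fin T.n), T.IsTransitiveSet S ∧ S.card = T.transNum := by
  have hne : {m | ∃ S : Finset (Fin T.n), T.IsTransitiveSet S ∧ S.card = m}.Nonempty :=
    ⟨0, ∅, T.isTransitiveSet_empty, Finset.card_empty⟩
  exact Nat.sSup_mem hne T.bddAbove_transSet

/-! ### The lexicographic product -/

/-- Substitution of `G` into every vertex of `T`. -/
noncomputable def prodT (T G : Tournament) : Tournament where
  n := T.n * G.n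
  adj u v :=
    if (finProdFinEquiv.symm u).1 = (finProdFinEquiv.symm v).1
    then G.adj (finProdFinEquiv.symm u).2 (finProdFinEquiv.symm v).2
    else T.adj (finProdFinEquiv.symm u).1 (finProdFinEquiv.symm v).1
  asymm := by
    intro u v h h'
    by_cases he : (finProdFinEquiv.symm u).1 = (finProdFinEquiv.symm v).1
    · rw [if_pos he] at h; rw [if_pos he.symm] at h'
      exact G.asymm _ _ h h'
    · rw [if_neg he] at h; rw [if_neg (Ne.symm he)] at h'
      exact T.asymm _ _ h h'
  total := by
    intro u v huv
    by_cases he : (finProdFinEquiv.symm u).1 = (finProdFinEquiv.symm v).1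
    · have h2 : (finProdFinEquiv.symm u).2 ≠ (finProdFinEquiv.symm v).2 := by
        intro h2
        exact huv (finProdFinEquiv.symm.injective (Prod.ext he h2))
      rcases G.total _ _ h2 with h | h
      · exact Or.inl (by simp only [if_pos he]; exact h)
      · exact Or.inr (by simp only [if_pos he.symm]; exact h)
    · rcases T.total _ _ he with h | h
      · exact Or.inl (by simp only [if_neg he]; exact h)
      · exact Or.inr (by simp only [if_neg (Ne.symm he)]; exact h)

variable {T G : Tournament}

lemma prodT_adj_of_eq {u v : Fin (T.prodT G).n}
    (h : (finProdFinEquiv.symm u).1 = (finProdFinEquiv.symm v).1) :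
    (T.prodT G).adj u v ↔ G.adj (finProdFinEquiv.symm u).2 (finProdFinEquiv.symm v).2 := by
  show (if _ then _ else _) ↔ _
  rw [if_pos h]

lemma prodT_adj_of_ne {u v : Fin (T.prodT G).n}
    (h : (finProdFinEquiv.symm u).1 ≠ (finProdFinEquiv.symm v).1) :
    (T.prodT G).adj u v ↔ T.adj (finProdFinEquiv.symm u).1 (finProdFinEquiv.symm v).1 := by
  show (if _ then _ else _) ↔ _
  rw [if_neg h]



lemma prodT_adj_pair (p q : Fin T.n × Fin G.n) :
    (T.prodT G).adj (finProdFinEquiv p) (finProdFinEquiv q) ↔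
      (if p.1 = q.1 then G.adj p.2 q.2 else T.adj p.1 q.1) := by
  show (if _ then _ else _) ↔ _
  rw [Equiv.symm_apply_apply, Equiv.symm_apply_apply]

lemma transNum_prodT : (T.prodT G).transNum = T.transNum * G.transNum := by
  apply le_antisymm
  · obtain ⟨S, hS, hcard⟩ := (T.prodT G).transNum_spec
    rw [← hcard]
    set F : Fin (T.prodT G).n → Fin T.n := fun u => (finProdFinEquiv.symm u).1 with hF
    set sn : Fin (T.prodT G).n → Fin G.n := fun u => (finProdFinEquiv.symm u).2 with hsn
    set B : Finset (Fin T.n) := S.image F with hB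
    have hBtrans : T.IsTransitiveSet B := by
      intro a ha b hb c hc hab hbc
      simp only [hB, Finset.mem_image] at ha hb hc
      obtain ⟨u, hu, rfl⟩ := ha
      obtain ⟨v, hv, rfl⟩ := hb
      obtain ⟨w, hw, rfl⟩ := hc
      have h1 : F u ≠ F v := by
        intro h; rw [h] at hab; exact T.asymm _ _ hab hab
      have h2 : F v ≠ F w := by
        intro h; rw [h] at hbc; exact T.asymm _ _ hbc hbc
      have h3 : F u ≠ F w := by
        intro h; rw [h] at hab; exact T.asymm _ _ hab hbc
      have huv : (T.prodT G).adj u v := (prodT_adj_of_ne h1).mpr hab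
      have hvw : (T.prodT G).adj v w := (prodT_adj_of_ne h2).mpr hbc
      exact (prodT_adj_of_ne h3).mp (hS u hu v hv w hw huv hvw)
    have hfibtrans : ∀ b : Fin T.n,
        G.IsTransitiveSet ((S.filter fun u => F u = b).image sn) := by
      intro b x hx y hy z hz hxy hyz
      simp only [Finset.mem_image, Finset.mem_filter] at hx hy hz
      obtain ⟨u, ⟨hu, hub⟩, rfl⟩ := hx
      obtain ⟨v, ⟨hv, hvb⟩, rfl⟩ := hy
      obtain ⟨w, ⟨hw, hwb⟩, rfl⟩ := hz
      have e1 : F u = F v := by rw [hub, hvb]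
      have e2 : F v = F w := by rw [hvb, hwb]
      have huv : (T.prodT G).adj u v := (prodT_adj_of_eq e1).mpr hxy
      have hvw : (T.prodT G).adj v w := (prodT_adj_of_eq e2).mpr hyz
      exact (prodT_adj_of_eq (e1.trans e2)).mp (hS u hu v hv w hw huv hvw)
    calc S.card = ∑ b ∈ B, (S.filter fun u => F u = b).card :=
          Finset.card_eq_sum_card_fiberwise (fun u hu => Finset.mem_image_of_mem F hu)
      _ ≤ ∑ _b ∈ B, G.transNum := by
          refine Finset.sum_le_sum fun b _ => ?_
          have hinj : Set.InjOn sn (S.filter fun u => F u = b) := by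
            intro u hu v hv h
            simp only [Finset.coe_filter, Set.mem_setOf_eq] at hu hv
            refine finProdFinEquiv.symm.injective (Prod.ext ?_ h)
            show F u = F v
            rw [hu.2, hv.2]
          rw [← Finset.card_image_of_injOn hinj]
          exact G.le_transNum (hfibtrans b)
      _ = B.card * G.transNum := by rw [Finset.sum_const, smul_eq_mul]
      _ ≤ T.transNum * G.transNum :=
          Nat.mul_le_mul_right _ (T.le_transNum hBtrans)
  · obtain ⟨S₁, h₁, hc₁⟩ := T.transNum_spec
    obtain ⟨S₂, h₂, hc₂⟩ := G.transNum_spec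
    rw [← hc₁, ← hc₂]
    have htrans : (T.prodT G).IsTransitiveSet ((S₁ ×ˢ S₂).image finProdFinEquiv) := by
      intro a ha b hb c hc hab hbc
      replace ha := Finset.mem_image.mp ha
      replace hb := Finset.mem_image.mp hb
      replace hc := Finset.mem_image.mp hc
      simp only [Finset.mem_product] at ha hb hc
      obtain ⟨p, hp, rfl⟩ := ha
      obtain ⟨q, hq, rfl⟩ := hb
      obtain ⟨r, hr, rfl⟩ := hc
      rw [prodT_adj_pair] at hab hbc ⊢
      by_cases e1 : p.1 = q.1 <;> by_cases e2 : q.1 = r.1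
      · rw [if_pos e1] at hab; rw [if_pos e2] at hbc
        rw [if_pos (e1.trans e2)]
        exact h₂ p.2 hp.2 q.2 hq.2 r.2 hr.2 hab hbc
      · rw [if_pos e1] at hab; rw [if_neg e2] at hbc
        rw [if_neg (by rw [e1]; exact e2), e1]
        exact hbc
      · rw [if_neg e1] at hab; rw [if_pos e2] at hbc
        rw [if_neg (by rw [← e2]; exact e1), ← e2]
        exact hab
      · rw [if_neg e1] at hab; rw [if_neg e2] at hbc
        have e3 : p.1 ≠ r.1 := by
          intro h; rw [h] at hab; exact T.asymm _ _ hab hbc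
        rw [if_neg e3]
        exact h₁ p.1 hp.1 q.1 hq.1 r.1 hr.1 hab hbc
    have := (T.prodT G).le_transNum htrans
    refine le_trans (le_of_eq ?_) this
    rw [← Finset.card_product]
    exact (Finset.card_image_of_injective _ finProdFinEquiv.injective).symm

lemma hfree_prodT {H : Tournament} (hfar : T.HFar H) (hfree : G.HFree H) :
    (T.prodT G).HFree H := by
  rintro ⟨f, hinj, hiff⟩
  set F : Fin H.n → Fin T.n := fun v => (finProdFinEquiv.symm (f v)).1 with hF
  set sn : Fin H.n → Fin G.n := fun v => (finProdFinEquiv.symm (f v)).2 with hsn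
  by_cases hone : ∀ u v : Fin H.n, F u = F v
  · apply hfree
    refine ⟨sn, ?_, ?_⟩
    · intro u v h
      exact hinj (finProdFinEquiv.symm.injective (Prod.ext (hone u v) h))
    · intro u v
      rw [hiff u v, prodT_adj_of_eq (hone u v)]
  · push_neg at hone
    obtain ⟨u₀, v₀, hne₀⟩ := hone
    set fib : Fin H.n → Finset (Fin H.n) :=
      fun v => Finset.univ.filter fun w => F w = F v with hfib
    set P : Finset (Finset (Fin H.n)) := Finset.univ.image fib with hP
    have hself : ∀ v, v ∈ fib v := fun v => by simp [hfib]
    have hmemfib : ∀ v w, w ∈ fib v ↔ F w = F v := fun v w => by simp [hfib]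
    have hfibP : ∀ v, fib v ∈ P := fun v => Finset.mem_image_of_mem _ (Finset.mem_univ v)
    have hunique : ∀ A ∈ P, ∀ v ∈ A, A = fib v := by
      intro A hA v hv
      simp only [hP, Finset.mem_image] at hA
      obtain ⟨w, -, rfl⟩ := hA
      have : F v = F w := (hmemfib w v).mp hv
      ext x
      rw [hmemfib, hmemfib, this]
    have hpart : H.IsHomogeneousPartition P := by
      constructor
      · intro A hA
        simp only [hP, Finset.mem_image] at hA
        obtain ⟨w, -, rfl⟩ := hA
        refine ⟨⟨w, hself w⟩, ?_⟩
        intro v hv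
        have hvF : F v ≠ F w := fun h => hv ((hmemfib w v).mpr h)
        rcases T.total (F v) (F w) hvF with h | h
        · left
          intro s hs
          have hsF : F s = F w := (hmemfib w s).mp hs
          have : F v ≠ F s := by rw [hsF]; exact hvF
          refine (hiff v s).mpr ((prodT_adj_of_ne this).mpr ?_)
          show T.adj (F v) (F s)
          rw [hsF]; exact h
        · right
          intro s hs
          have hsF : F s = F w := (hmemfib w s).mp hs
          have : F s ≠ F v := by rw [hsF]; exact (Ne.symm hvF)
          refine (hiff s v).mpr ((prodT_adj_of_ne this).mpr ?_)
          show T.adj (F s) (F v)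
          rw [hsF]; exact h
      · intro v
        refine ⟨fib v, ⟨hfibP v, hself v⟩, ?_⟩
        rintro A ⟨hA, hvA⟩
        exact hunique A hA v hvA
    have hPcard : 1 < P.card := by
      rw [Finset.one_lt_card]
      refine ⟨fib u₀, hfibP u₀, fib v₀, hfibP v₀, ?_⟩
      intro h
      exact hne₀ ((hmemfib v₀ u₀).mp (h ▸ hself u₀))
    apply hfar P hpart hPcard
    have hAne : ∀ A : {A // A ∈ P}, ∃ v, v ∈ A.1 := fun A => (hpart.1 A.1 A.2).1
    set g : {A // A ∈ P} → Fin T.n := fun A => F (hAne A).choose with hg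
    have hgfib : ∀ A : {A // A ∈ P}, ∀ v ∈ A.1, F v = g A := by
      intro A v hv
      have h1 := hunique A.1 A.2 _ (hAne A).choose_spec
      rw [h1] at hv
      exact (hmemfib _ v).mp hv
    have hAfib : ∀ A : {A // A ∈ P}, A.1 = fib (hAne A).choose :=
      fun A => hunique A.1 A.2 _ (hAne A).choose_spec
    have hginj : Function.Injective g := by
      intro A B h
      apply Subtype.ext
      rw [hAfib A, hAfib B]
      ext x
      rw [hmemfib, hmemfib]
      show F x = g A ↔ F x = g B
      rw [h]
    refine ⟨g, hginj, ?_⟩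
    intro A B hAB
    have hgne : g A ≠ g B := fun h => hAB (hginj h)
    constructor
    · intro hall
      obtain ⟨a, ha⟩ := hAne A
      obtain ⟨b, hb⟩ := hAne B
      have := (hiff a b).mp (hall a ha b hb)
      rw [prodT_adj_of_ne (show F a ≠ F b by rw [hgfib A a ha, hgfib B b hb]; exact hgne)] at this
      rw [← hgfib A a ha, ← hgfib B b hb]
      exact this
    · intro h a ha b hb
      refine (hiff a b).mpr ?_
      rw [prodT_adj_of_ne (show F a ≠ F b by rw [hgfib A a ha, hgfib B b hb]; exact hgne)]
      show T.adj (F a) (F b)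
      rw [hgfib A a ha, hgfib B b hb]
      exact h

/-- The one-vertex tournament. -/
def oneT : Tournament where
  n := 1
  adj _ _ := False
  asymm _ _ h := h.elim
  total u v h := absurd (Subsingleton.elim u v) h

lemma oneT_transNum : oneT.transNum = 1 := by
  apply le_antisymm
  · obtain ⟨S, -, hcard⟩ := oneT.transNum_spec
    rw [← hcard]
    exact S.card_le_univ.trans_eq (Fintype.card_fin _)
  · have := oneT.le_transNum (oneT.isTransitiveSet_singleton ⟨0, by simp [oneT]⟩)
    simpa using this

lemma oneT_hfree {H : Tournament} (hH : 2 ≤ H.n) : oneT.HFree H := by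
  rintro ⟨f, hinj, -⟩
  have := Fintype.card_le_of_injective f hinj
  rw [Fintype.card_fin, Fintype.card_fin] at this
  simp only [Fintype.card_fin, oneT] at this
  omega

end Tournament

open Tournament

/-- Let H be a tournament with at least two vertices and T a nonempty
tournament that is H-far. Then for every integer k ≥ 0 there exists an H-free tournament G
with |G| = |T|^k and tr(G) = tr(T)^k. -/
theorem stmt13 (H T : Tournament) (hH : 2 ≤ H.n) (hT : 0 < T.n) (hfar : T.HFar H) :
    ∀ k : ℕ, ∃ G : Tournament, G.HFree H ∧ G.n = T.n ^ k ∧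
      G.transNum = T.transNum ^ k := by
  intro k
  induction k with
  | zero =>
    refine ⟨oneT, oneT_hfree hH, ?_, ?_⟩
    · simp [oneT]
    · simp [oneT_transNum]
  | succ k ih =>
    obtain ⟨G, hfree, hn, htr⟩ := ih
    refine ⟨T.prodT G, hfree_prodT hfar hfree, ?_, ?_⟩
    · show T.n * G.n = _
      rw [hn, pow_succ, Nat.mul_comm]
    · rw [transNum_prodT, htr, pow_succ, Nat.mul_comm]
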